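/- Let V be a real vector space equipped with a symmetric bilinear form g, and let (e₁,e₂,e₃,e₄) be a null frame for g. Let λ ∈ ℝ with λ ≠ 0 and let f = (f₁,f₂), f̄ = (f̄₁,f̄₂) ∈ ℝ². Define e₄' = λ(e₄ + Σ_{b=1,2} f_b e_b + ¼|f|² e₃); e_a' = Σ_{b=1,2}(δ_{ab} + ½ f̄_a f_b) e_b + ½ f̄_a e₄ + (½ f_a + ⅛|f|² f̄_a) e₃ for a = 1,2; and e₃' = λ⁻¹((1 + ½ f·f̄ + (1/16)|f|²|f̄|²) e₃ + Σ_{b=1,2}(f̄_b + ¼|f̄|² f_b) e_b + ¼|f̄|² e₄). Then (e₁',e₂',e₃',e₄') is again a null frame for g, i.e. g(e₃',e₃') = g(e₄',e₄') = 0, g(e₃',e₄') = -2, g(e_a',e₃') = g(e_a',e₄') = 0 for a = 1,2, and g(e_a',e_b') = δ_{ab} for a,b ∈ {1,2}. -/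
import Mathlib


/-- **General frame transformation (Lemma `Generalframetransf`).**
Given a null frame `(e₁, e₂, e₃, e₄)` for a symmetric bilinear form `g`, a nonzero scalar
`lam` and transition coefficients `f = (f₁, f₂)`, `fb = (fb₁, fb₂)`, the transformed frame
`(e₁', e₂', e₃', e₄')` defined by the general frame-transformation formulas is again a
null frame for `g`. -/
theorem null_frame_transformation
    {V : Type*} [AddCommGroup V] [Module ℝ V]
    (g : LinearMap.BilinForm ℝ V) (hg : ∀ x y, g x y = g y x)
    (e₁ e₂ e₃ e₄ : V)
    (h33 : g e₃ e₃ = 0) (h44 : g e₄ e₄ = 0) (h34 : g e₃ e₄ = -2)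
    (h13 : g e₁ e₃ = 0) (h14 : g e₁ e₄ = 0)
    (h23 : g e₂ e₃ = 0) (h24 : g e₂ e₄ = 0)
    (h11 : g e₁ e₁ = 1) (h22 : g e₂ e₂ = 1) (h12 : g e₁ e₂ = 0)
    (lam f₁ f₂ fb₁ fb₂ : ℝ) (hlam : lam ≠ 0)
    (e₁' e₂' e₃' e₄' : V)
    (he₄' : e₄' = lam • (e₄ + f₁ • e₁ + f₂ • e₂ + ((f₁ ^ 2 + f₂ ^ 2) / 4) • e₃))
    (he₁' : e₁' = (1 + fb₁ * f₁ / 2) • e₁ + (fb₁ * f₂ / 2) • e₂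
        + (fb₁ / 2) • e₄ + (f₁ / 2 + (f₁ ^ 2 + f₂ ^ 2) * fb₁ / 8) • e₃)
    (he₂' : e₂' = (fb₂ * f₁ / 2) • e₁ + (1 + fb₂ * f₂ / 2) • e₂
        + (fb₂ / 2) • e₄ + (f₂ / 2 + (f₁ ^ 2 + f₂ ^ 2) * fb₂ / 8) • e₃)
    (he₃' : e₃' = lam⁻¹ • ((1 + (f₁ * fb₁ + f₂ * fb₂) / 2
          + (f₁ ^ 2 + f₂ ^ 2) * (fb₁ ^ 2 + fb₂ ^ 2) / 16) • e₃
        + (fb₁ + (fb₁ ^ 2 + fb₂ ^ 2) * f₁ / 4) • e₁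
        + (fb₂ + (fb₁ ^ 2 + fb₂ ^ 2) * f₂ / 4) • e₂
        + ((fb₁ ^ 2 + fb₂ ^ 2) / 4) • e₄)) :
    g e₃' e₃' = 0 ∧ g e₄' e₄' = 0 ∧ g e₃' e₄' = -2 ∧
    g e₁' e₃' = 0 ∧ g e₁' e₄' = 0 ∧ g e₂' e₃' = 0 ∧ g e₂' e₄' = 0 ∧
    g e₁' e₁' = 1 ∧ g e₂' e₂' = 1 ∧ g e₁' e₂' = 0 ∧ g e₂' e₁' = 0 := by
  have h31 : g e₃ e₁ = 0 := by rw [hg]; exact h13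
  have h41 : g e₄ e₁ = 0 := by rw [hg]; exact h14
  have h32 : g e₃ e₂ = 0 := by rw [hg]; exact h23
  have h42 : g e₄ e₂ = 0 := by rw [hg]; exact h24
  have h43 : g e₄ e₃ = -2 := by rw [hg]; exact h34
  have h21 : g e₂ e₁ = 0 := by rw [hg]; exact h12
  subst he₁' he₂' he₃' he₄'
  simp only [map_add, map_smul, LinearMap.add_apply, LinearMap.smul_apply, smul_eq_mul,
    h33, h44, h34, h43, h13, h14, h23, h24, h31, h41, h32, h42, h11, h22, h12, h21]
  refine ⟨by ring, by ring, ?_, by ring, by ring, by ring, by ring, by ring, by ring, by ring, by ring⟩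
  field_simp
  ring
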